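/- Let P be an irreducible 2×2 stochastic matrix with entries P = [[p, 1−p],[1−q, q]]. Then P is embeddable (there exists a generator matrix Q with e^Q = P) if and only if trace(P) = p + q > 1, which is also equivalent to det(P) > 0 and to P being reversibly embeddable. -/

import Mathlib

open Matrix

/-- `Q` is a generator matrix: nonnegative off-diagonal entries, rows sum to 0. -/
def IsGenerator {n : ℕ} (Q : Matrix (Fin n) (Fin n) ℝ) : Prop :=
  (∀ i j, i ≠ j → 0 ≤ Q i j) ∧ ∀ i, ∑ j, Q i j = 0

/-- `Q` is a reversible generator matrix. -/
def IsReversibleGenerator {n : ℕ} (Q : Matrix (Fin n) (Fin n) ℝ) : Prop :=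
  IsGenerator Q ∧
  ∃ π : Fin n → ℝ, (∀ i, 0 ≤ π i) ∧ (∑ i, π i = 1) ∧
    ∀ i j, π i * Q i j = π j * Q j i

lemma exp_gen (a b : ℝ) (hs : 0 < a + b) :
    NormedSpace.exp (!![-a, a; b, -b]) =
      !![1 - a * ((1 - Real.exp (-(a+b)))/(a+b)), a * ((1 - Real.exp (-(a+b)))/(a+b));
         b * ((1 - Real.exp (-(a+b)))/(a+b)), 1 - b * ((1 - Real.exp (-(a+b)))/(a+b))] := by
  set s := a + b with hsdef
  set U : Matrix (Fin 2) (Fin 2) ℝ := !![1, a; 1, -b] with hU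
  have hdet : U.det = -s := by simp [hU, Matrix.det_fin_two_of]; ring
  have hUu : IsUnit U := by
    rw [Matrix.isUnit_iff_isUnit_det, hdet, isUnit_iff_ne_zero]
    exact neg_ne_zero.mpr hs.ne'
  have hUinv : U⁻¹ = s⁻¹ • !![b, a; 1, -1] := by
    rw [Matrix.inv_def, hdet, Matrix.adjugate_fin_two_of, Ring.inverse_eq_inv]
    ext i j; fin_cases i <;> fin_cases j <;>
      simp [Matrix.smul_apply] <;> field_simp
  have hd : (Matrix.diagonal ![0, -s] : Matrix (Fin 2) (Fin 2) ℝ) = !![0, 0; 0, -s] := by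
    ext i j; fin_cases i <;> fin_cases j <;> simp
  have hQ : !![-a, a; b, -b] = U * Matrix.diagonal ![0, -s] * U⁻¹ := by
    rw [hUinv, hd]
    ext i j
    fin_cases i <;> fin_cases j <;>
      simp [hU, Matrix.mul_apply, Fin.sum_univ_two, Matrix.smul_apply] <;>
      field_simp <;> ring_nf
  rw [hQ, Matrix.exp_conj U _ hUu, Matrix.exp_diagonal, hUinv]
  have he : (NormedSpace.exp (![0, -s] : Fin 2 → ℝ)) = ![1, Real.exp (-s)] := by
    rw [Pi.exp_def]; ext i; fin_cases i <;> simp [← Real.exp_eq_exp_ℝ]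
  rw [show (Matrix.diagonal (NormedSpace.exp (![0, -s] : Fin 2 → ℝ)))
      = !![1, 0; 0, Real.exp (-s)] by rw [he]; ext i j; fin_cases i <;> fin_cases j <;> simp]
  ext i j
  fin_cases i <;> fin_cases j <;>
    simp [hU, Matrix.mul_apply, Fin.sum_univ_two, Matrix.smul_apply] <;>
    field_simp <;> ring

lemma embed_of_trace (p q : ℝ) (hp1 : p < 1) (hq1 : q < 1) (h : 1 < p + q) :
    ∃ Q : Matrix (Fin 2) (Fin 2) ℝ, IsReversibleGenerator Q ∧
      NormedSpace.exp Q = !![p, 1 - p; 1 - q, q] := by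
  have hpq0 : 0 < p + q - 1 := by linarith
  have hpq2 : 0 < 2 - p - q := by linarith
  set s : ℝ := -Real.log (p + q - 1) with hsdef
  have hes : Real.exp (-s) = p + q - 1 := by
    rw [hsdef, neg_neg, Real.exp_log hpq0]
  have hs : 0 < s := by
    rw [hsdef, neg_pos]
    exact Real.log_neg hpq0 (by linarith)
  set c : ℝ := (2 - p - q) / s with hcdef
  have hc : 0 < c := div_pos hpq2 hs
  set a : ℝ := (1 - p) / c with hadef
  set b : ℝ := (1 - q) / c with hbdef
  have ha : 0 ≤ a := div_nonneg (by linarith) hc.le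
  have hb : 0 ≤ b := div_nonneg (by linarith) hc.le
  have hab : a + b = s := by
    rw [hadef, hbdef, hcdef]
    field_simp
    ring
  have habs : 0 < a + b := by rw [hab]; exact hs
  refine ⟨!![-a, a; b, -b], ⟨⟨?_, ?_⟩, ![b / s, a / s], ?_, ?_, ?_⟩, ?_⟩
  · intro i j hij
    fin_cases i <;> fin_cases j <;> simp_all
  · intro i; fin_cases i <;> simp [Fin.sum_univ_two]
  · intro i
    fin_cases i <;> exact div_nonneg (by assumption) hs.le
  · rw [Fin.sum_univ_two]
    show b / s + a / s = 1
    field_simp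
    linarith [hab]
  · intro i j
    fin_cases i <;> fin_cases j <;> simp <;> ring
  · rw [exp_gen a b habs, hab, hes]
    have hcc : (1 - (p + q - 1)) / s = c := by rw [hcdef]; ring_nf
    rw [hcc]
    have hac : a * c = 1 - p := by rw [hadef]; field_simp
    have hbc : b * c = 1 - q := by rw [hbdef]; field_simp
    rw [hac, hbc]
    norm_num

theorem kendall_two_by_two (p q : ℝ)
    (hp0 : 0 ≤ p) (hq0 : 0 ≤ q) (hp1 : p < 1) (hq1 : q < 1) :
    ((∃ Q : Matrix (Fin 2) (Fin 2) ℝ, IsGenerator Q ∧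
        NormedSpace.exp Q = !![p, 1 - p; 1 - q, q]) ↔ 1 < p + q) ∧
    (1 < p + q ↔ 0 < (!![p, 1 - p; 1 - q, q] : Matrix (Fin 2) (Fin 2) ℝ).det) ∧
    ((∃ Q : Matrix (Fin 2) (Fin 2) ℝ, IsGenerator Q ∧
        NormedSpace.exp Q = !![p, 1 - p; 1 - q, q]) ↔
      (∃ Q : Matrix (Fin 2) (Fin 2) ℝ, IsReversibleGenerator Q ∧
        NormedSpace.exp Q = !![p, 1 - p; 1 - q, q])) := by
  have main : (∃ Q : Matrix (Fin 2) (Fin 2) ℝ, IsGenerator Q ∧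
      NormedSpace.exp Q = !![p, 1 - p; 1 - q, q]) ↔ 1 < p + q := by
    constructor
    · rintro ⟨Q, ⟨hoff, hrow⟩, hexp⟩
      set a : ℝ := Q 0 1 with hadef
      set b : ℝ := Q 1 0 with hbdef
      have ha : 0 ≤ a := hoff 0 1 (by decide)
      have hb : 0 ≤ b := hoff 1 0 (by decide)
      have h0 : Q 0 0 = -a := by
        have := hrow 0; rw [Fin.sum_univ_two] at this; linarith
      have h1 : Q 1 1 = -b := by
        have := hrow 1; rw [Fin.sum_univ_two] at this; linarith
      have hQform : Q = !![-a, a; b, -b] := by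
        ext i j; fin_cases i <;> fin_cases j <;> simp [h0, h1, hadef, hbdef]
      rw [hQform] at hexp
      rcases eq_or_lt_of_le (add_nonneg ha hb) with hab | hab
      · exfalso
        have hQ0 : (!![-a, a; b, -b] : Matrix (Fin 2) (Fin 2) ℝ) = 0 := by
          have ha0 : a = 0 := by linarith
          have hb0 : b = 0 := by linarith
          ext i j; fin_cases i <;> fin_cases j <;> simp [ha0, hb0]
        rw [hQ0, NormedSpace.exp_zero] at hexp
        have := congr_fun (congr_fun hexp.symm 0) 0
        simp [Matrix.one_apply] at this
        linarith
      · rw [exp_gen a b hab] at hexp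
        have e00 := congr_fun (congr_fun hexp 0) 0
        have e11 := congr_fun (congr_fun hexp 1) 1
        simp at e00 e11
        have hsc : (a + b) * ((1 - Real.exp (-(a+b)))/(a+b)) = 1 - Real.exp (-(a+b)) := by
          field_simp
        have hepos : 0 < Real.exp (-(a+b)) := Real.exp_pos _
        have harg : -(a+b) = -b + -a := by ring
        rw [harg] at hsc hepos
        nlinarith [e00, e11, hsc]
    · intro h
      obtain ⟨Q, hQ, hexp⟩ := embed_of_trace p q hp1 hq1 h
      exact ⟨Q, hQ.1, hexp⟩
  refine ⟨main, ?_, ?_⟩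
  · rw [Matrix.det_fin_two_of]
    constructor <;> intro h <;> nlinarith
  · constructor
    · intro h
      exact embed_of_trace p q hp1 hq1 (main.mp h)
    · rintro ⟨Q, hQ, hexp⟩
      exact ⟨Q, hQ.1, hexp⟩
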